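/- Let p be a prime with p ≥ 3, let d ≥ 0, and let f : (ZMod p)^{d+1} → ZMod p be a totally separated local rule, i.e. f(x_1,…,x_{d+1}) = Σ_{i=1}^{d+1} a_i x_i^{q_i} with a_i ∈ ZMod p. If every exponent q_i is a positive even integer, then the global map F of the cellular automaton with local rule f is not injective. -/
import Mathlib


/-- The global map of the cellular automaton over `ZMod m` with diameter `d`
and local rule `f : (ZMod m)^{d+1} → ZMod m`:
`F(x)_i = f(x_i, x_{i+1}, …, x_{i+d})`. -/
def globalMap (m d : ℕ) (f : (Fin (d + 1) → ZMod m) → ZMod m)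
    (x : ℤ → ZMod m) : ℤ → ZMod m :=
  fun i => f fun k => x (i + ((k : ℕ) : ℤ))

/-- Let `p` be a prime with `p ≥ 3`, let `d ≥ 0`, and let `f` be a totally
separated local rule `f(x_1,…,x_{d+1}) = Σ_i a_i x_i ^ q_i`.  If every exponent
`q_i` is a positive even integer, then the global map of the CA with local rule
`f` is not injective. -/
theorem totallySeparated_even_exponents_not_injective
    (p : ℕ) (hp : p.Prime) (hp3 : 3 ≤ p) (d : ℕ)
    (a : Fin (d + 1) → ZMod p) (q : Fin (d + 1) → ℕ)
    (hq_pos : ∀ i, 0 < q i) (hq_even : ∀ i, Even (q i))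
    (f : (Fin (d + 1) → ZMod p) → ZMod p)
    (hf : ∀ x, f x = ∑ i, a i * x i ^ q i) :
    ¬ Function.Injective (globalMap p d f) := by
  intro h
  have heq : globalMap p d f (fun _ => (1 : ZMod p)) =
      globalMap p d f (fun _ => (-1 : ZMod p)) := by
    funext i
    simp only [globalMap, hf]
    congr 1
    funext j
    rw [(hq_even j).neg_pow]
  have h1 : (fun _ : ℤ => (1 : ZMod p)) = (fun _ : ℤ => (-1 : ZMod p)) := h heq
  have h2 : (1 : ZMod p) = -1 := congrFun h1 0
  have : (2 : ZMod p) = 0 := by linear_combination h2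
  have hchar : (p : ℕ) ∣ 2 :=
    (ZMod.natCast_eq_zero_iff 2 p).mp (by exact_mod_cast this)
  have := Nat.le_of_dvd (by norm_num) hchar
  omega
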